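/- arXiv:1904.04444 — 8 statements merged into one kernel-verified Lean document; each statement's English description precedes it below -/
import Mathlib

section
/- Let L be a finite-dimensional Lie algebra of dimension n over a field, and let C be a Lie algebra admitting a central ideal B with L ≅ C/B, B ⊆ Z(C) ∩ C², and B ∩ {[x,y] : x,y ∈ C} = 0. Then dim C ≤ n(n+1)/2. -/
open Module Submodule

/-- If `L` is an `n`-dimensional Lie algebra over a field `K` and `(C, B)` is a
CP defining pair for `L` (i.e. `L ≅ C/B`, `B ⊆ Z(C) ∩ C²` and `B ∩ K(C) = 0`), then
`dim C ≤ n(n+1)/2`. -/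
theorem cp_defining_pair_dim_le (K : Type*) [Field K]
    (L : Type*) [LieRing L] [LieAlgebra K L] [Module.Finite K L]
    (C : Type*) [LieRing C] [LieAlgebra K C]
    (n : ℕ) (hn : Module.finrank K L = n)
    (B : LieIdeal K C)
    (hiso : Nonempty ((C ⧸ B) ≃ₗ⁅K⁆ L))
    (hcentral : B ≤ LieAlgebra.center K C ⊓ LieAlgebra.derivedSeries K C 1)
    (hcomm : ∀ x ∈ B, (∃ y z : C, ⁅y, z⁆ = x) → x = 0) :
    Module.finrank K C ≤ n * (n + 1) / 2 := by
  classical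
  obtain ⟨e⟩ := hiso
  haveI : Module.Finite K (C ⧸ B) := Module.Finite.equiv e.symm.toLinearEquiv
  have hq : Module.finrank K (C ⧸ B) = n := by
    rw [← hn]; exact e.toLinearEquiv.finrank_eq
  let b : Basis (Fin n) K (C ⧸ B) := (Module.finBasis K (C ⧸ B)).reindex (finCongr hq)
  choose x hx using fun i => LieSubmodule.Quotient.surjective_mk' B (b i)
  have lsum : ∀ (a : C) (f : Fin n → C) (t : Finset (Fin n)),
      ⁅a, ∑ i ∈ t, f i⁆ = ∑ i ∈ t, ⁅a, f i⁆ := by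
    intro a f t
    induction t using Finset.induction with
    | empty => simp
    | insert _ _ h ih => rw [Finset.sum_insert h, Finset.sum_insert h, lie_add, ih]
  have suml : ∀ (f : Fin n → C) (c : C), ⁅∑ i, f i, c⁆ = ∑ i, ⁅f i, c⁆ := by
    intro f c
    rw [← lie_skew, lsum, ← Finset.sum_neg_distrib]
    exact Finset.sum_congr rfl fun i _ => lie_skew (f i) c
  have mksum : ∀ r : Fin n → K,
      LieSubmodule.Quotient.mk' B (∑ i, r i • x i) = ∑ i, r i • b i := by
    intro r
    have h0 : LieSubmodule.Quotient.mk' B (∑ i, r i • x i)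
        = ((LieSubmodule.Quotient.mk' B : C →ₗ⁅K,C⁆ C ⧸ B) : C →ₗ[K] C ⧸ B)
            (∑ i, r i • x i) := rfl
    rw [h0, map_sum]
    refine Finset.sum_congr rfl fun i _ => ?_
    rw [map_smul]
    congr 1
    exact hx i
  -- every element agrees modulo `B` with a combination of the lifts
  have hrepr : ∀ a : C, ∃ r : Fin n → K, a - ∑ i, r i • x i ∈ B := by
    intro a
    refine ⟨fun i => b.repr (LieSubmodule.Quotient.mk' B a) i, ?_⟩
    rw [← LieSubmodule.Quotient.mk_eq_zero, map_sub, mksum,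
      b.sum_repr (LieSubmodule.Quotient.mk' B a), sub_self]
  -- brackets with central elements vanish
  have hc : ∀ u : C, u ∈ B → ∀ d : C, ⁅d, u⁆ = 0 := by
    intro u hu d
    exact (LieModule.mem_maxTrivSubmodule K C C u).mp ((le_trans hcentral inf_le_left) hu) d
  have hc' : ∀ u : C, u ∈ B → ∀ d : C, ⁅u, d⁆ = 0 := by
    intro u hu d
    rw [← lie_skew, hc u hu d, neg_zero]
  -- the spanning set, indexed by strictly increasing pairs
  let P : Finset (Fin n × Fin n) := Finset.univ.filter fun p => p.1 < p.2
  let s : Finset C := P.image fun p => ⁅x p.1, x p.2⁆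
  have hxx : ∀ i j : Fin n, ⁅x i, x j⁆ ∈ span K (s : Set C) := by
    intro i j
    rcases lt_trichotomy i j with hij | hij | hij
    · exact subset_span (by
        simp only [s, Finset.coe_image, Set.mem_image, Finset.mem_coe]
        exact ⟨(i, j), by simp [P, hij], rfl⟩)
    · subst hij; rw [lie_self]; exact zero_mem _
    · rw [← lie_skew]
      exact neg_mem (subset_span (by
        simp only [s, Finset.coe_image, Set.mem_image, Finset.mem_coe]
        exact ⟨(j, i), by simp [P, hij], rfl⟩))
  have hbr : ∀ a c : C, ⁅a, c⁆ ∈ span K (s : Set C) := by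
    intro a c
    obtain ⟨r, hr⟩ := hrepr a
    obtain ⟨t, ht⟩ := hrepr c
    have h1 : ⁅a, c⁆ = ⁅a, ∑ j, t j • x j⁆ := by
      have h0 : ⁅a, c - ∑ j, t j • x j⁆ = 0 := hc _ ht a
      rw [lie_sub, sub_eq_zero] at h0; exact h0
    have h2 : ⁅a, ∑ j, t j • x j⁆ = ⁅∑ i, r i • x i, ∑ j, t j • x j⁆ := by
      have h0 : ⁅a - ∑ i, r i • x i, ∑ j, t j • x j⁆ = 0 := hc' _ hr _
      rw [sub_lie, sub_eq_zero] at h0; exact h0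
    rw [h1, h2, suml]
    refine sum_mem fun i _ => ?_
    rw [smul_lie]
    refine smul_mem _ _ ?_
    rw [lsum]
    refine sum_mem fun j _ => ?_
    rw [lie_smul]
    exact smul_mem _ _ (hxx i j)
  -- B is contained in the span
  have hBle : LieSubmodule.toSubmodule B ≤ span K (s : Set C) := by
    intro m hm
    have hm1 : m ∈ LieAlgebra.derivedSeries K C 1 := (le_trans hcentral inf_le_right) hm
    have hd : LieAlgebra.derivedSeries K C 1 = ⁅(⊤ : LieIdeal K C), (⊤ : LieIdeal K C)⁆ := by
      rw [LieAlgebra.derivedSeries_def, LieAlgebra.derivedSeriesOfIdeal_succ,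
        LieAlgebra.derivedSeriesOfIdeal_zero]
    rw [hd] at hm1
    rw [← LieSubmodule.mem_toSubmodule, LieSubmodule.lieIdeal_oper_eq_linear_span'] at hm1
    refine span_le.mpr ?_ hm1
    rintro m ⟨y, -, z, -, rfl⟩
    exact hbr y z
  -- finiteness
  haveI hfinspan : FiniteDimensional K (span K (s : Set C)) :=
    FiniteDimensional.span_of_finite K (Finset.finite_toSet s)
  haveI hfinB : FiniteDimensional K (LieSubmodule.toSubmodule B) :=
    Submodule.finiteDimensional_of_le hBle
  haveI hfinqB : Module.Finite K (C ⧸ LieSubmodule.toSubmodule B) :=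
    (inferInstance : Module.Finite K (C ⧸ B))
  haveI hfinC : Module.Finite K C := by
    rw [Module.finite_def]
    refine Submodule.fg_of_fg_map_of_fg_inf_ker (LieSubmodule.toSubmodule B).mkQ ?_ ?_
    · rw [Submodule.map_top, Submodule.range_mkQ]
      exact Module.finite_def.mp hfinqB
    · rw [Submodule.ker_mkQ, top_inf_eq]
      exact (Submodule.fg_iff_finiteDimensional _).mpr hfinB
  -- dimension count
  have hsum : n + finrank K (LieSubmodule.toSubmodule B) = finrank K C := by
    have h0 : finrank K (C ⧸ LieSubmodule.toSubmodule B)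
        + finrank K (LieSubmodule.toSubmodule B) = finrank K C :=
      Submodule.finrank_quotient_add_finrank (LieSubmodule.toSubmodule B)
    have h1 : finrank K (C ⧸ LieSubmodule.toSubmodule B) = n := hq
    rwa [h1] at h0
  have hcardP : P.card = n * (n - 1) / 2 := by
    have h0 : P.card = ∑ j : Fin n, (j : ℕ) := by
      rw [Finset.card_filter, ← Finset.univ_product_univ, Finset.sum_product_right]
      refine Finset.sum_congr rfl fun j _ => ?_
      rw [← Finset.card_filter]
      rw [show (Finset.univ.filter fun i : Fin n => (i, j).1 < (i, j).2) = Finset.Iio j from by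
        ext i; simp]
      exact Fin.card_Iio j
    rw [h0, show (∑ j : Fin n, (j : ℕ)) = ∑ i ∈ Finset.range n, i from
      Fin.sum_univ_eq_sum_range (fun i => i) n, Finset.sum_range_id]
  have hBdim : finrank K (LieSubmodule.toSubmodule B) ≤ n * (n - 1) / 2 := by
    calc finrank K (LieSubmodule.toSubmodule B) ≤ finrank K (span K (s : Set C)) :=
          Submodule.finrank_mono hBle
      _ ≤ s.card := finrank_span_finset_le_card s
      _ ≤ P.card := Finset.card_image_le
      _ = n * (n - 1) / 2 := hcardP
  have harith : n + n * (n - 1) / 2 ≤ n * (n + 1) / 2 := by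
    match n with
    | 0 => simp
    | Nat.succ m =>
      have h1 : (m + 1) * (m + 1 + 1) = (m + 1) * m + (m + 1) * 2 := by ring
      have h2 : m + 1 - 1 = m := rfl
      rw [h2, h1, Nat.add_mul_div_right _ _ (by norm_num : (0:ℕ) < 2)]
      exact Nat.le_of_eq (Nat.add_comm _ _)
  calc finrank K C = n + finrank K (LieSubmodule.toSubmodule B) := hsum.symm
    _ ≤ n + n * (n - 1) / 2 := Nat.add_le_add_left hBdim n
    _ ≤ n * (n + 1) / 2 := harith
end

section
/- Let C be a Lie algebra over a field such that the quotient C/Z(C) by its center has finite dimension n. Then the derived subalgebra C² = [C,C] has dimension at most n(n-1)/2. -/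
lemma card_lt_pairs_le (n : ℕ) :
    (Finset.univ.filter (fun p : Fin n × Fin n => p.1 < p.2)).card ≤ n * (n - 1) / 2 := by
  classical
  have h := SimpleGraph.card_edgeFinset_top_eq_card_choose_two (V := Fin n)
  have hle : (Finset.univ.filter (fun p : Fin n × Fin n => p.1 < p.2)).card ≤
      (⊤ : SimpleGraph (Fin n)).edgeFinset.card := by
    apply Finset.card_le_card_of_injOn (fun p => s(p.1, p.2))
    · intro p hp
      simp only [Finset.mem_coe, Finset.mem_filter] at hp
      simp [SimpleGraph.mem_edgeFinset, SimpleGraph.mem_edgeSet, hp.2.ne]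
    · intro p hp q hq hpq
      simp only [Finset.mem_coe, Finset.mem_filter] at hp hq
      rw [Sym2.eq_iff] at hpq
      rcases hpq with ⟨h1, h2⟩ | ⟨h1, h2⟩
      · exact Prod.ext h1 h2
      · exact absurd (h1 ▸ h2 ▸ hp.2) (lt_asymm hq.2)
  calc _ ≤ _ := hle
    _ = (Fintype.card (Fin n)).choose 2 := h
    _ = n * (n - 1) / 2 := by rw [Fintype.card_fin, Nat.choose_two_right]

/-- If the quotient of a Lie algebra `C` over a field by its center has finite
dimension `n`, then the derived subalgebra `C² = [C,C]` has dimension at most `n(n-1)/2`. -/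
theorem derived_dim_le_of_center_quotient (K : Type*) [Field K]
    (C : Type*) [LieRing C] [LieAlgebra K C]
    (n : ℕ) [Module.Finite K (C ⧸ LieAlgebra.center K C)]
    (hn : Module.finrank K (C ⧸ LieAlgebra.center K C) = n) :
    Module.finrank K (LieAlgebra.derivedSeries K C 1) ≤ n * (n - 1) / 2 := by
  classical
  set Z := LieAlgebra.center K C with hZ
  let b : Module.Basis (Fin n) K (C ⧸ Z) := Module.finBasisOfFinrankEq K _ hn
  -- lift basis elements
  choose x hx using fun i => LieSubmodule.Quotient.surjective_mk' Z (b i)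
  -- the finite spanning set
  let T : Finset C := (Finset.univ.filter (fun p : Fin n × Fin n => p.1 < p.2)).image
      (fun p => ⁅x p.1, x p.2⁆)
  set S : Submodule K C := Submodule.span K (T : Set C) with hS
  -- all brackets of lifts lie in S
  have hxx : ∀ i j : Fin n, ⁅x i, x j⁆ ∈ S := by
    intro i j
    rcases lt_trichotomy i j with h | h | h
    · exact Submodule.subset_span (Finset.mem_image.2 ⟨(i, j), by simpa using h, rfl⟩)
    · subst h; simp
    · have : ⁅x i, x j⁆ = -⁅x j, x i⁆ := (lie_skew _ _).symm
      rw [this]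
      exact neg_mem (Submodule.subset_span (Finset.mem_image.2 ⟨(j, i), by simpa using h, rfl⟩))
  -- decomposition modulo the center
  have hdecomp : ∀ c : C, c - ∑ i, (b.repr (LieSubmodule.Quotient.mk' Z c)) i • x i ∈ Z := by
    intro c
    rw [← LieSubmodule.Quotient.mk_eq_zero, ← LieModuleHom.coe_toLinearMap, map_sub, map_sum]
    simp only [map_smul, LieModuleHom.coe_toLinearMap, hx]
    rw [b.sum_repr, sub_self]
  -- center elements have zero brackets
  have hcen : ∀ z : C, z ∈ Z → ∀ w : C, ⁅z, w⁆ = 0 ∧ ⁅w, z⁆ = 0 := by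
    intro z hz w
    rw [hZ, LieAlgebra.center, LieModule.mem_maxTrivSubmodule] at hz
    refine ⟨?_, hz w⟩
    rw [← lie_skew, hz w, neg_zero]
  have sum_lie' : ∀ (f : Fin n → C) (v : C), ⁅∑ j, f j, v⁆ = ∑ j, ⁅f j, v⁆ := by
    intro f v
    exact sum_lie _ _ _
  have lie_sum' : ∀ (v : C) (f : Fin n → C), ⁅v, ∑ j, f j⁆ = ∑ j, ⁅v, f j⁆ := by
    intro v f
    rw [← LieAlgebra.ad_apply (R := K), map_sum]
    simp [LieAlgebra.ad_apply]
  -- any bracket lies in S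
  have key : ∀ c d : C, ⁅c, d⁆ ∈ S := by
    intro c d
    set a := fun i => (b.repr (LieSubmodule.Quotient.mk' Z c)) i with ha
    set a' := fun i => (b.repr (LieSubmodule.Quotient.mk' Z d)) i with ha'
    have hc : c = (∑ i, a i • x i) + (c - ∑ i, a i • x i) := by abel
    have hd : d = (∑ i, a' i • x i) + (d - ∑ i, a' i • x i) := by abel
    rw [hc, hd, add_lie, lie_add, lie_add,
      (hcen _ (hdecomp c) _).1, (hcen _ (hdecomp c) _).1,
      (hcen _ (hdecomp d) _).2]
    simp only [add_zero, zero_add]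
    rw [sum_lie']
    refine Submodule.sum_mem _ fun i _ => ?_
    rw [smul_lie]
    refine Submodule.smul_mem _ _ ?_
    rw [lie_sum']
    refine Submodule.sum_mem _ fun j _ => ?_
    rw [lie_smul]
    exact Submodule.smul_mem _ _ (hxx i j)
  -- derived series toSubmodule ≤ S
  have hle : (LieAlgebra.derivedSeries K C 1).toSubmodule ≤ S := by
    have h1 : LieAlgebra.derivedSeries K C 1 = ⁅(⊤ : LieIdeal K C), (⊤ : LieIdeal K C)⁆ := rfl
    rw [h1, LieSubmodule.lieIdeal_oper_eq_linear_span']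
    rw [Submodule.span_le]
    rintro m ⟨u, -, v, -, rfl⟩
    exact key u v
  haveI : FiniteDimensional K S := FiniteDimensional.span_finset K T
  calc Module.finrank K (LieAlgebra.derivedSeries K C 1)
      = Module.finrank K (LieAlgebra.derivedSeries K C 1).toSubmodule := rfl
    _ ≤ Module.finrank K S := Submodule.finrank_mono hle
    _ ≤ T.card := by
        have := finrank_span_finset_le_card (R := K) T
        simpa [Set.finrank, hS] using this
    _ ≤ _ := (Finset.card_image_le).trans (card_lt_pairs_le n)
end

section
/- Let L be a Lie algebra with free presentation L ≅ F/R. Define A = R/⟨K(F) ∩ R⟩, D = (F² ∩ R)/⟨K(F) ∩ R⟩, and E ≅ R/(R ∩ F²). Then A is a central extension of D by the abelian Lie algebra E which splits, so A ≅ D ⊕ E. -/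
section ProdLie

variable (K : Type*) [CommRing K]
variable (M N : Type*) [LieRing M] [LieAlgebra K M] [LieRing N] [LieAlgebra K N]

/-- The product of two Lie rings, with componentwise bracket. -/
instance Prod.instLieRing : LieRing (M × N) where
  bracket x y := (⁅x.1, y.1⁆, ⁅x.2, y.2⁆)
  add_lie x y z := Prod.ext (add_lie x.1 y.1 z.1) (add_lie x.2 y.2 z.2)
  lie_add x y z := Prod.ext (lie_add x.1 y.1 z.1) (lie_add x.2 y.2 z.2)
  lie_self x := Prod.ext (lie_self x.1) (lie_self x.2)
  leibniz_lie x y z := Prod.ext (leibniz_lie x.1 y.1 z.1) (leibniz_lie x.2 y.2 z.2)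

/-- The product of two Lie algebras. -/
instance Prod.instLieAlgebra : LieAlgebra K (M × N) where
  lie_smul t x y := Prod.ext (lie_smul t x.1 y.1) (lie_smul t x.2 y.2)

end ProdLie

section Aux

variable {K : Type*} [CommRing K]
variable {M N : Type*} [LieRing M] [LieAlgebra K M] [LieRing N] [LieAlgebra K N]

lemma prod_isLieAbelian [IsLieAbelian M] [IsLieAbelian N] : IsLieAbelian (M × N) :=
  ⟨fun x y => Prod.ext (trivial_lie_zero M M x.1 y.1) (trivial_lie_zero N N x.2 y.2)⟩

/-- A linear equivalence between abelian Lie algebras is a Lie algebra equivalence. -/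
def LieEquiv.ofAbelian [IsLieAbelian M] [IsLieAbelian N] (e : M ≃ₗ[K] N) : M ≃ₗ⁅K⁆ N :=
  { e with
    map_lie' := fun {x y} => by
      simp only [trivial_lie_zero]
      exact map_zero e.toLinearMap }

end Aux

/-- For a free presentation `L ≅ F/R`, with `J = ⟨K(F) ∩ R⟩` the ideal generated
by the commutators of `F` lying in `R`, set `A = R/J`, `D = (F² ∩ R)/J` and
`E = R/(R ∩ F²)`.  Then `E` is abelian and `A ≅ D ⊕ E`. -/
theorem hopf_ideal_splits
    (K : Type*) [Field K] (X : Type*)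
    (L : Type*) [LieRing L] [LieAlgebra K L]
    (R : LieIdeal K (FreeLieAlgebra K X))
    (hL : Nonempty ((FreeLieAlgebra K X ⧸ R) ≃ₗ⁅K⁆ L))
    (J : LieIdeal K (FreeLieAlgebra K X))
    (hJ : J = LieSubmodule.lieSpan K (FreeLieAlgebra K X)
      {z | (∃ x y : FreeLieAlgebra K X, ⁅x, y⁆ = z) ∧ z ∈ R}) :
    IsLieAbelian
      (↥R ⧸ LieIdeal.comap R.incl (LieAlgebra.derivedSeries K (FreeLieAlgebra K X) 1)) ∧
    Nonempty
      ((↥R ⧸ LieIdeal.comap R.incl J) ≃ₗ⁅K⁆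
        ((↥(LieAlgebra.derivedSeries K (FreeLieAlgebra K X) 1 ⊓ R) ⧸
            LieIdeal.comap (LieAlgebra.derivedSeries K (FreeLieAlgebra K X) 1 ⊓ R).incl J) ×
          (↥R ⧸ LieIdeal.comap R.incl (LieAlgebra.derivedSeries K (FreeLieAlgebra K X) 1)))) := by
  classical
  set F := FreeLieAlgebra K X with hF
  set F2 := LieAlgebra.derivedSeries K F 1 with hF2
  -- basic membership facts
  have hmemF2 : ∀ x y : F, ⁅x, y⁆ ∈ F2 := by
    intro x y
    rw [hF2, LieAlgebra.derivedSeries_def, LieAlgebra.derivedSeriesOfIdeal_succ,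
      LieAlgebra.derivedSeriesOfIdeal_zero]
    exact LieSubmodule.lie_mem_lie (LieSubmodule.mem_top x) (LieSubmodule.mem_top y)
  have hmemJ : ∀ x y : F, x ∈ R → ⁅x, y⁆ ∈ J := by
    intro x y hx
    rw [hJ]
    refine LieSubmodule.subset_lieSpan ⟨⟨x, y, rfl⟩, ?_⟩
    have : ⁅y, x⁆ ∈ R := R.lie_mem hx
    rw [← lie_skew]
    exact neg_mem this
  have hJR : J ≤ R := by
    rw [hJ]; exact LieSubmodule.lieSpan_le.2 fun z hz => hz.2
  have hJF2 : J ≤ F2 := by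
    rw [hJ]
    exact LieSubmodule.lieSpan_le.2 fun z hz => by
      obtain ⟨⟨x, y, rfl⟩, -⟩ := hz; exact hmemF2 x y
  -- abelian-ness of the three quotients
  have habE : IsLieAbelian (↥R ⧸ LieIdeal.comap R.incl F2) := by
    constructor
    intro u v
    obtain ⟨x, rfl⟩ := LieSubmodule.Quotient.surjective_mk' _ u
    obtain ⟨y, rfl⟩ := LieSubmodule.Quotient.surjective_mk' _ v
    show ⁅(LieSubmodule.Quotient.mk x : _), LieSubmodule.Quotient.mk y⁆ = 0
    rw [← LieSubmodule.Quotient.mk_bracket, LieSubmodule.Quotient.mk_eq_zero',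
      LieIdeal.mem_comap, LieIdeal.incl_apply]
    exact hmemF2 _ _
  refine ⟨habE, ?_⟩
  have habA : IsLieAbelian (↥R ⧸ LieIdeal.comap R.incl J) := by
    constructor
    intro u v
    obtain ⟨x, rfl⟩ := LieSubmodule.Quotient.surjective_mk' _ u
    obtain ⟨y, rfl⟩ := LieSubmodule.Quotient.surjective_mk' _ v
    show ⁅(LieSubmodule.Quotient.mk x : _), LieSubmodule.Quotient.mk y⁆ = 0
    rw [← LieSubmodule.Quotient.mk_bracket, LieSubmodule.Quotient.mk_eq_zero',
      LieIdeal.mem_comap, LieIdeal.incl_apply]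
    exact hmemJ _ _ x.2
  have habD : IsLieAbelian (↥(F2 ⊓ R) ⧸ LieIdeal.comap (F2 ⊓ R).incl J) := by
    constructor
    intro u v
    obtain ⟨x, rfl⟩ := LieSubmodule.Quotient.surjective_mk' _ u
    obtain ⟨y, rfl⟩ := LieSubmodule.Quotient.surjective_mk' _ v
    show ⁅(LieSubmodule.Quotient.mk x : _), LieSubmodule.Quotient.mk y⁆ = 0
    rw [← LieSubmodule.Quotient.mk_bracket, LieSubmodule.Quotient.mk_eq_zero',
      LieIdeal.mem_comap, LieIdeal.incl_apply]
    exact hmemJ _ _ x.2.2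
  haveI := habA; haveI := habD; haveI := habE
  haveI := prod_isLieAbelian
    (M := ↥(F2 ⊓ R) ⧸ LieIdeal.comap (F2 ⊓ R).incl J)
    (N := ↥R ⧸ LieIdeal.comap R.incl F2)
  -- the inclusion (F2 ⊓ R) → R as a linear map
  let g : ↥(F2 ⊓ R) →ₗ[K] ↥R :=
    (LieIdeal.inclusion (inf_le_right : F2 ⊓ R ≤ R)).toLinearMap
  have hg : ∀ x : ↥(F2 ⊓ R), ((g x : ↥R) : F) = (x : F) := fun x =>
    LieIdeal.coe_inclusion _ x
  -- the projection A → E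
  obtain ⟨π, hπ⟩ : ∃ π : (↥R ⧸ LieIdeal.comap R.incl J) →ₗ[K]
      (↥R ⧸ LieIdeal.comap R.incl F2),
      ∀ x : ↥R, π (Submodule.Quotient.mk x) = Submodule.Quotient.mk x :=
    ⟨Submodule.mapQ _ _ LinearMap.id (fun x hx => by
      rw [Submodule.mem_comap, LinearMap.id_apply]
      exact hJF2 hx),
     fun x => Submodule.mapQ_apply _ _ _ x⟩
  have hπsurj : Function.Surjective π := by
    intro e
    obtain ⟨x, rfl⟩ := Submodule.Quotient.mk_surjective _ e
    exact ⟨Submodule.Quotient.mk x, hπ x⟩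
  -- the map D → A induced by the inclusion
  obtain ⟨ι, hι⟩ : ∃ ι : (↥(F2 ⊓ R) ⧸ LieIdeal.comap (F2 ⊓ R).incl J) →ₗ[K]
      (↥R ⧸ LieIdeal.comap R.incl J),
      ∀ x : ↥(F2 ⊓ R), ι (Submodule.Quotient.mk x) = Submodule.Quotient.mk (g x) :=
    ⟨Submodule.mapQ _ _ g (fun x hx => by
      rw [Submodule.mem_comap]
      show g x ∈ LieIdeal.comap R.incl J
      rw [LieIdeal.mem_comap, LieIdeal.incl_apply, hg]
      exact hx),
     fun x => Submodule.mapQ_apply _ _ _ x⟩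
  have hinj : Function.Injective ι := by
    refine LinearMap.ker_eq_bot.mp (LinearMap.ker_eq_bot'.mpr ?_)
    intro d hd
    obtain ⟨x, rfl⟩ := Submodule.Quotient.mk_surjective _ d
    rw [hι, Submodule.Quotient.mk_eq_zero] at hd
    rw [Submodule.Quotient.mk_eq_zero]
    show x ∈ LieIdeal.comap (F2 ⊓ R).incl J
    have hd' : g x ∈ LieIdeal.comap R.incl J := hd
    rw [LieIdeal.mem_comap, LieIdeal.incl_apply, hg] at hd'
    rw [LieIdeal.mem_comap, LieIdeal.incl_apply]
    exact hd'
  have hrange : LinearMap.range ι = LinearMap.ker π := by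
    ext a
    constructor
    · rintro ⟨d, rfl⟩
      obtain ⟨x, rfl⟩ := Submodule.Quotient.mk_surjective _ d
      rw [LinearMap.mem_ker, hι, hπ, Submodule.Quotient.mk_eq_zero]
      show g x ∈ LieIdeal.comap R.incl F2
      rw [LieIdeal.mem_comap, LieIdeal.incl_apply, hg]
      exact x.2.1
    · intro ha
      obtain ⟨y, rfl⟩ := Submodule.Quotient.mk_surjective _ a
      rw [LinearMap.mem_ker, hπ, Submodule.Quotient.mk_eq_zero] at ha
      have hy : (y : F) ∈ F2 := by
        have : y ∈ LieIdeal.comap R.incl F2 := ha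
        rwa [LieIdeal.mem_comap, LieIdeal.incl_apply] at this
      have hyR : (y : F) ∈ F2 ⊓ R := by
        rw [LieSubmodule.mem_inf]; exact ⟨hy, y.2⟩
      refine ⟨Submodule.Quotient.mk (⟨(y : F), hyR⟩ : ↥(F2 ⊓ R)), ?_⟩
      rw [hι]
      exact congrArg Submodule.Quotient.mk (Subtype.ext (hg _))
  obtain ⟨q, hq⟩ := Submodule.exists_isCompl (LinearMap.range ι)
  let e1 : (↥(F2 ⊓ R) ⧸ LieIdeal.comap (F2 ⊓ R).incl J) ≃ₗ[K] LinearMap.range ι :=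
    LinearEquiv.ofInjective ι hinj
  let e2 : ((↥R ⧸ LieIdeal.comap R.incl J) ⧸ LinearMap.range ι) ≃ₗ[K]
      (↥R ⧸ LieIdeal.comap R.incl F2) :=
    (Submodule.quotEquivOfEq _ _ hrange).trans (π.quotKerEquivOfSurjective hπsurj)
  let e3 : ↥q ≃ₗ[K] (↥R ⧸ LieIdeal.comap R.incl F2) :=
    (Submodule.quotientEquivOfIsCompl _ q hq).symm.trans e2
  let efinal : (↥R ⧸ LieIdeal.comap R.incl J) ≃ₗ[K]
      ((↥(F2 ⊓ R) ⧸ LieIdeal.comap (F2 ⊓ R).incl J) ×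
        (↥R ⧸ LieIdeal.comap R.incl F2)) :=
    (Submodule.prodEquivOfIsCompl _ q hq).symm.trans (e1.symm.prodCongr e3)
  exact ⟨LieEquiv.ofAbelian efinal⟩
end

section
/- Let L be a finite-dimensional Lie algebra. If (T,τ) is a universal element of the category c(L), then T is a CP cover of L, i.e., (T, ker τ) is a CP defining pair of maximal dimension. -/
universe u

/-- `(C, λ)` is a member of the class `c(L)`: `λ : C → L` is surjective with
`ker λ ⊆ C² ∩ Z(C)` and `ker λ ∩ K(C) = 0`. -/
def IsCPElem {K : Type u} [Field K] {L C : Type u} [LieRing L] [LieAlgebra K L]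
    [LieRing C] [LieAlgebra K C] (lam : C →ₗ⁅K⁆ L) : Prop :=
  Function.Surjective lam ∧
    lam.ker ≤ LieAlgebra.derivedSeries K C 1 ⊓ LieAlgebra.center K C ∧
    ∀ x ∈ lam.ker, (∃ y z : C, ⁅y, z⁆ = x) → x = 0

/-- `(C, B)` is a CP defining pair for `L`. -/
def IsCPPair (K : Type u) [Field K] (L C : Type u) [LieRing L] [LieAlgebra K L]
    [LieRing C] [LieAlgebra K C] (B : LieIdeal K C) : Prop :=
  Nonempty ((C ⧸ B) ≃ₗ⁅K⁆ L) ∧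
    B ≤ LieAlgebra.center K C ⊓ LieAlgebra.derivedSeries K C 1 ∧
    ∀ x ∈ B, (∃ y z : C, ⁅y, z⁆ = x) → x = 0

section Aux

variable {K : Type u} [Field K]

lemma lie_eq_of_central {C : Type u} [LieRing C] [LieAlgebra K C] {a b p q : C}
    (hz : a - p ∈ LieAlgebra.center K C) (hw : b - q ∈ LieAlgebra.center K C) :
    ⁅a, b⁆ = ⁅p, q⁆ := by
  have hz' : ∀ x : C, ⁅x, a - p⁆ = 0 := (LieModule.mem_maxTrivSubmodule K C C _).mp hz
  have hw' : ∀ x : C, ⁅x, b - q⁆ = 0 := (LieModule.mem_maxTrivSubmodule K C C _).mp hw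
  have h1 : ⁅a, b⁆ = ⁅a, q⁆ := by
    have := hw' a; rw [lie_sub, sub_eq_zero] at this; exact this
  have h2 : ⁅q, a⁆ = ⁅q, p⁆ := by
    have := hz' q; rw [lie_sub, sub_eq_zero] at this; exact this
  rw [h1, ← lie_skew, h2, lie_skew]

lemma derived_le_of {C : Type u} [LieRing C] [LieAlgebra K C] (P Q : Submodule K C)
    (hc : ∀ c : C, ∃ p ∈ P, c - p ∈ LieAlgebra.center K C)
    (hpq : ∀ p ∈ P, ∀ q ∈ P, ⁅p, q⁆ ∈ Q) :
    ∀ x ∈ LieAlgebra.derivedSeries K C 1, x ∈ Q := by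
  intro x hx
  have hd : LieAlgebra.derivedSeries K C 1 = ⁅(⊤ : LieIdeal K C), (⊤ : LieIdeal K C)⁆ := by
    rw [LieAlgebra.derivedSeries_def, LieAlgebra.derivedSeriesOfIdeal_succ,
      LieAlgebra.derivedSeriesOfIdeal_zero]
  rw [hd] at hx
  rw [← LieSubmodule.mem_toSubmodule, LieSubmodule.lieIdeal_oper_eq_linear_span'] at hx
  refine Submodule.span_le.mpr ?_ hx
  rintro _ ⟨a, -, b, -, rfl⟩
  obtain ⟨p, hp, hzp⟩ := hc a
  obtain ⟨q, hq, hzq⟩ := hc b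
  rw [lie_eq_of_central (K := K) hzp hzq]
  exact hpq p hp q hq

/-- The quotient map as a morphism of Lie algebras. -/
def lieMkHom {C : Type u} [LieRing C] [LieAlgebra K C] (B : LieIdeal K C) : C →ₗ⁅K⁆ C ⧸ B :=
  { (B : Submodule K C).mkQ with
    map_lie' := fun {x y} => rfl }

end Aux

/-- if `(T, τ)` is a universal element of `c(L)` for a finite-dimensional
Lie algebra `L`, then `T` is a CP cover of `L`: `(T, ker τ)` is a CP defining pair of
maximal dimension. -/
theorem universal_element_is_CP_cover
    (K : Type u) [Field K] (L : Type u) [LieRing L] [LieAlgebra K L] [Module.Finite K L]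
    (T : Type u) [LieRing T] [LieAlgebra K T] (τ : T →ₗ⁅K⁆ L)
    (hT : IsCPElem τ)
    (huniv : ∀ (C : Type u) [LieRing C] [LieAlgebra K C] (lam : C →ₗ⁅K⁆ L),
      IsCPElem lam → ∃ h : T →ₗ⁅K⁆ C, lam.comp h = τ) :
    IsCPPair K L T τ.ker ∧
      ∀ (C : Type u) [LieRing C] [LieAlgebra K C] (B : LieIdeal K C),
        IsCPPair K L C B → Module.finrank K C ≤ Module.finrank K T := by
  classical
  obtain ⟨hsurjτ, hkerτ, hbrτ⟩ := hT
  -- T is finite-dimensional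
  obtain ⟨n, v, hv⟩ := Module.Finite.exists_fin (R := K) (M := L)
  choose t ht using fun i => hsurjτ (v i)
  set P : Submodule K T := Submodule.span K (Set.range t) with hP
  set Q : Submodule K T :=
    Submodule.span K (Set.range fun ij : Fin n × Fin n => ⁅t ij.1, t ij.2⁆) with hQ
  have hQfin : FiniteDimensional K Q :=
    FiniteDimensional.span_of_finite K (Set.finite_range _)
  have hcT : ∀ a : T, ∃ p ∈ P, a - p ∈ LieAlgebra.center K T := by
    intro a
    have hmap : P.map τ.toLinearMap = ⊤ := by
      rw [hP, Submodule.map_span, ← Set.range_comp]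
      rw [show (⇑τ.toLinearMap ∘ t) = v from funext fun i => ht i, hv]
    have : τ a ∈ P.map τ.toLinearMap := by rw [hmap]; trivial
    obtain ⟨p, hp, hpe⟩ := this
    refine ⟨p, hp, ?_⟩
    have hker : a - p ∈ τ.ker := by
      rw [LieHom.mem_ker, map_sub]
      rw [show τ.toLinearMap p = τ p from rfl] at hpe
      rw [hpe, sub_self]
    exact ((LieSubmodule.mem_inf _ _ _).mp (hkerτ hker)).2
  have hpqT : ∀ p ∈ P, ∀ q ∈ P, ⁅p, q⁆ ∈ Q := by
    intro p hp q hq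
    induction hp, hq using Submodule.span_induction₂ with
    | mem_mem x y hx hy =>
      obtain ⟨i, rfl⟩ := hx; obtain ⟨j, rfl⟩ := hy
      exact Submodule.subset_span ⟨(i, j), rfl⟩
    | zero_left y hy => simp
    | zero_right x hx => simp
    | add_left x y z hx hy hz h1 h2 => rw [add_lie]; exact Q.add_mem h1 h2
    | add_right x y z hx hy hz h1 h2 => rw [lie_add]; exact Q.add_mem h1 h2
    | smul_left r x y hx hy h1 => rw [smul_lie]; exact Q.smul_mem r h1
    | smul_right r x y hx hy h1 => rw [lie_smul]; exact Q.smul_mem r h1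
  have hderQ := derived_le_of P Q hcT hpqT
  have hkerle : LinearMap.ker τ.toLinearMap ≤ Q := by
    intro x hx
    have hx' : x ∈ τ.ker := LieHom.mem_ker.mpr hx
    exact hderQ x ((LieSubmodule.mem_inf _ _ _).mp (hkerτ hx')).1
  have hkerfin : FiniteDimensional K (LinearMap.ker τ.toLinearMap) :=
    Submodule.finiteDimensional_of_le hkerle
  have hTfin : Module.Finite K T := by
    rw [Module.finite_def]
    apply Submodule.fg_of_fg_map_of_fg_inf_ker τ.toLinearMap
    · have hrt : LinearMap.range (τ : T →ₗ[K] L) = ⊤ := LinearMap.range_eq_top.mpr hsurjτ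
      rw [Submodule.map_top, hrt]
      exact Module.finite_def.mp ‹Module.Finite K L›
    · rw [top_inf_eq]
      exact (Submodule.fg_iff_finiteDimensional _).mpr hkerfin
  constructor
  · -- (T, ker τ) is a CP defining pair
    refine ⟨?_, ?_, hbrτ⟩
    · have hrange : τ.range = ⊤ := (LieHom.range_eq_top τ).mpr hsurjτ
      exact ⟨τ.quotKerEquivRange.trans
        ((LieEquiv.ofEq _ _ (congrArg SetLike.coe hrange)).trans LieSubalgebra.topEquiv)⟩
    · intro x hx
      have := (LieSubmodule.mem_inf _ _ _).mp (hkerτ hx)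
      exact (LieSubmodule.mem_inf _ _ _).mpr ⟨this.2, this.1⟩
  · -- maximality
    intro C _ _ B hB
    obtain ⟨⟨e⟩, hB2, hB3⟩ := hB
    set lam : C →ₗ⁅K⁆ L := e.toLieHom.comp (lieMkHom B) with hlamdef
    have hrep : ∀ x : C, lam x = e.toLinearEquiv ((B : Submodule K C).mkQ x) :=
      fun x => rfl
    have hmk0 : ∀ x : C, (B : Submodule K C).mkQ x = 0 ↔ x ∈ B := fun x =>
      Submodule.Quotient.mk_eq_zero _
    have hmemker : ∀ x : C, x ∈ lam.ker ↔ x ∈ B := by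
      intro x
      rw [LieHom.mem_ker, hrep]
      exact (LinearEquiv.map_eq_zero_iff e.toLinearEquiv).trans (hmk0 x)
    have hlam : IsCPElem lam := by
      refine ⟨?_, ?_, ?_⟩
      · intro y
        obtain ⟨c, hc⟩ := (B : Submodule K C).mkQ_surjective (e.toLinearEquiv.symm y)
        exact ⟨c, by rw [hrep, hc, LinearEquiv.apply_symm_apply]⟩
      · intro x hx
        have hxB : x ∈ B := (hmemker x).mp hx
        have := (LieSubmodule.mem_inf _ _ _).mp (hB2 hxB)
        exact (LieSubmodule.mem_inf _ _ _).mpr ⟨this.2, this.1⟩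
      · intro x hx hbr
        exact hB3 x ((hmemker x).mp hx) hbr
    obtain ⟨h, hcomp⟩ := huniv C lam hlam
    have hτ : ∀ s : T, lam (h s) = τ s := by
      intro s
      rw [← hcomp]
      rfl
    -- B-valued difference decomposition
    have hdiff : ∀ c : C, ∃ s : T, c - h s ∈ B := by
      intro c
      obtain ⟨s, hs⟩ := hsurjτ (lam c)
      refine ⟨s, ?_⟩
      have : lam (c - h s) = 0 := by rw [map_sub, hτ, hs, sub_self]
      exact (hmemker _).mp (LieHom.mem_ker.mpr this)
    set Rh : Submodule K C := LinearMap.range h.toLinearMap with hRh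
    have hcC : ∀ c : C, ∃ p ∈ Rh, c - p ∈ LieAlgebra.center K C := by
      intro c
      obtain ⟨s, hsB⟩ := hdiff c
      exact ⟨h s, ⟨s, rfl⟩, ((LieSubmodule.mem_inf _ _ _).mp (hB2 hsB)).1⟩
    have hpqC : ∀ p ∈ Rh, ∀ q ∈ Rh, ⁅p, q⁆ ∈ Rh := by
      rintro _ ⟨a, rfl⟩ _ ⟨b, rfl⟩
      exact ⟨⁅a, b⁆, h.map_lie a b⟩
    have hderR := derived_le_of Rh Rh hcC hpqC
    have hsurj : Function.Surjective h := by
      intro c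
      obtain ⟨s, hsB⟩ := hdiff c
      have h1 : c - h s ∈ Rh :=
        hderR _ ((LieSubmodule.mem_inf _ _ _).mp (hB2 hsB)).2
      have h2 : h s ∈ Rh := ⟨s, rfl⟩
      have : c ∈ Rh := by
        have := Rh.add_mem h2 h1
        rwa [add_sub_cancel] at this
      obtain ⟨s', hs'⟩ := this
      exact ⟨s', hs'⟩
    have hrangeT : Rh = ⊤ := LinearMap.range_eq_top.mpr hsurj
    calc Module.finrank K C = Module.finrank K (⊤ : Submodule K C) := (finrank_top K C).symm
      _ = Module.finrank K Rh := by rw [hrangeT]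
      _ ≤ Module.finrank K T := LinearMap.finrank_range_le _
end

section
/- Let L be a finite-dimensional Lie algebra. If the class c(L) contains a universal element, then any two CP covers of L are isomorphic as Lie algebras. -/
universe u

/-- `C` is a CP cover of `L`: the first component of a CP defining pair of maximal
dimension. -/
def IsCPCover (K : Type u) [Field K] (L C : Type u) [LieRing L] [LieAlgebra K L]
    [LieRing C] [LieAlgebra K C] : Prop :=
  ∃ B : LieIdeal K C, IsCPPair K L C B ∧
    ∀ (C' : Type u) [LieRing C'] [LieAlgebra K C'] (B' : LieIdeal K C'),
      IsCPPair K L C' B' → Module.finrank K C' ≤ Module.finrank K C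



open LieAlgebra

section Aux

variable {K : Type u} [Field K]

/-- Brackets of elements of spans lie in the span of pairwise brackets. -/
private lemma lie_mem_span_aux {C : Type u} [LieRing C] [LieAlgebra K C] {s t : Set C} {x y : C}
    (hx : x ∈ Submodule.span K s) (hy : y ∈ Submodule.span K t) :
    ⁅x, y⁆ ∈ Submodule.span K {z | ∃ u ∈ s, ∃ v ∈ t, ⁅u, v⁆ = z} := by
  set D := Submodule.span K {z | ∃ u ∈ s, ∃ v ∈ t, ⁅u, v⁆ = z} with hD
  have base : ∀ u ∈ s, ∀ y' , y' ∈ Submodule.span K t → ⁅u, y'⁆ ∈ D := by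
    intro u hu y' hy'
    induction hy' using Submodule.span_induction with
    | mem v hv => exact Submodule.subset_span ⟨u, hu, v, hv, rfl⟩
    | zero => simp
    | add a b _ _ ha hb => rw [lie_add]; exact D.add_mem ha hb
    | smul c a _ ha => rw [lie_smul]; exact D.smul_mem c ha
  induction hx using Submodule.span_induction with
  | mem u hu => exact base u hu y hy
  | zero => simp
  | add a b _ _ ha hb => rw [add_lie]; exact D.add_mem ha hb
  | smul c a _ ha => rw [smul_lie]; exact D.smul_mem c ha

private lemma derived_one_le_aux {C : Type u} [LieRing C] [LieAlgebra K C]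
    (p : Submodule K C) (hp : ∀ x y : C, ⁅x, y⁆ ∈ p) {c : C}
    (hc : c ∈ derivedSeries K C 1) : c ∈ p := by
  have h1 : derivedSeries K C 1 = ⁅(⊤ : LieIdeal K C), (⊤ : LieIdeal K C)⁆ := by
    rw [derivedSeries_def, derivedSeriesOfIdeal_succ, derivedSeriesOfIdeal_zero]
  have h2 : LieSubmodule.toSubmodule (⁅(⊤ : LieIdeal K C), (⊤ : LieIdeal K C)⁆ : LieIdeal K C) ≤ p := by
    rw [LieSubmodule.lieIdeal_oper_eq_linear_span']
    refine Submodule.span_le.mpr ?_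
    rintro z ⟨x, -, y, -, rfl⟩
    exact hp x y
  refine h2 ?_
  rw [LieSubmodule.mem_toSubmodule]
  rw [h1] at hc
  exact hc

private lemma center_lie_zero {C : Type u} [LieRing C] [LieAlgebra K C] {a : C}
    (ha : a ∈ center K C) (b : C) : ⁅b, a⁆ = 0 ∧ ⁅a, b⁆ = 0 := by
  have h1 : ⁅b, a⁆ = 0 := (LieModule.mem_maxTrivSubmodule K C C a).mp ha b
  have h2 : ⁅a, b⁆ = 0 := by rw [← lie_skew, h1, neg_zero]
  exact ⟨h1, h2⟩

/-- Key surjectivity fact. -/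
private lemma surj_of_factor {T C L : Type u} [LieRing T] [LieAlgebra K T]
    [LieRing C] [LieAlgebra K C] [LieRing L] [LieAlgebra K L]
    (lam : C →ₗ⁅K⁆ L)
    (hker : lam.ker ≤ derivedSeries K C 1 ⊓ center K C)
    (f : T →ₗ⁅K⁆ C) (hs : Function.Surjective (lam.comp f)) :
    Function.Surjective f := by
  set p : Submodule K C := LinearMap.range (f : T →ₗ[K] C) with hp
  have step1 : ∀ c : C, ∃ t : T, c - f t ∈ lam.ker := by
    intro c
    obtain ⟨t, ht⟩ := hs (lam c)
    refine ⟨t, ?_⟩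
    rw [LieHom.mem_ker, map_sub]
    have h : lam (f t) = lam c := ht
    rw [h, sub_self]
  have hbr : ∀ x y : C, ⁅x, y⁆ ∈ p := by
    intro x y
    obtain ⟨t, ht⟩ := step1 x
    obtain ⟨t', ht'⟩ := step1 y
    have hcx : x - f t ∈ center K C := ((hker ht).2)
    have hcy : y - f t' ∈ center K C := ((hker ht').2)
    have e1 : ⁅x, y⁆ = ⁅f t, f t'⁆ := by
      conv_lhs => rw [show x = f t + (x - f t) by abel, show y = f t' + (y - f t') by abel]
      rw [add_lie, lie_add, lie_add, (center_lie_zero hcy (f t)).1,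
        (center_lie_zero hcy (x - f t)).1, (center_lie_zero hcx (f t')).2]
      abel
    rw [e1, ← LieHom.map_lie]
    exact ⟨⁅t, t'⁆, rfl⟩
  intro c
  obtain ⟨t, ht⟩ := step1 c
  have h2 : c - f t ∈ p := derived_one_le_aux p hbr ((hker ht).1)
  obtain ⟨t', ht'⟩ := h2
  have ht'' : f t' = c - f t := ht'
  exact ⟨t + t', by rw [map_add, ht'']; abel⟩

/-- Finite-dimensionality of elements of `c(L)`. -/
private lemma finite_of_cp {T L : Type u} [LieRing T] [LieAlgebra K T]
    [LieRing L] [LieAlgebra K L] [Module.Finite K L]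
    (τ : T →ₗ⁅K⁆ L) (hsurj : Function.Surjective τ)
    (hker : τ.ker ≤ derivedSeries K T 1 ⊓ center K T) : Module.Finite K T := by
  obtain ⟨s, hs⟩ := Module.Finite.fg_top (R := K) (M := L)
  set g : L → T := Function.surjInv hsurj with hg
  have hgτ : ∀ x : L, τ (g x) = x := fun x => Function.surjInv_eq hsurj x
  set A : Set T := g '' ↑s with hA
  set F : Submodule K T := Submodule.span K A with hF
  have step1 : ∀ c : T, ∃ m ∈ F, c - m ∈ τ.ker := by
    intro c
    have himg : τ '' A = ↑s := by
      rw [hA, Set.image_image]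
      simp [hgτ]
    have hmap : Submodule.map (τ : T →ₗ[K] L) F = ⊤ := by
      rw [hF, Submodule.map_span]
      rw [show ((τ : T →ₗ[K] L) '' A) = ↑s from himg, hs]
    have : τ c ∈ Submodule.map (τ : T →ₗ[K] L) F := by rw [hmap]; trivial
    obtain ⟨m, hm, hm'⟩ := this
    refine ⟨m, hm, ?_⟩
    rw [LieHom.mem_ker, map_sub]
    have h : τ m = τ c := hm'
    rw [h, sub_self]
  set Dset : Set T := {z | ∃ u ∈ A, ∃ v ∈ A, ⁅u, v⁆ = z} with hDset
  set D : Submodule K T := Submodule.span K Dset with hDdef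
  have hbr : ∀ x y : T, ⁅x, y⁆ ∈ D := by
    intro x y
    obtain ⟨m, hm, hx⟩ := step1 x
    obtain ⟨m', hm', hy⟩ := step1 y
    have hcx : x - m ∈ center K T := (hker hx).2
    have hcy : y - m' ∈ center K T := (hker hy).2
    have e1 : ⁅x, y⁆ = ⁅m, m'⁆ := by
      conv_lhs => rw [show x = m + (x - m) by abel, show y = m' + (y - m') by abel]
      rw [add_lie, lie_add, lie_add, (center_lie_zero hcy m).1,
        (center_lie_zero hcy (x - m)).1, (center_lie_zero hcx m').2]
      abel
    rw [e1]
    exact lie_mem_span_aux hm hm'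
  have htop : (⊤ : Submodule K T) = F ⊔ D := by
    refine le_antisymm ?_ le_top
    intro c _
    obtain ⟨m, hm, hc⟩ := step1 c
    have h2 : c - m ∈ D := derived_one_le_aux D hbr ((hker hc).1)
    have : c = m + (c - m) := by abel
    rw [this]
    exact Submodule.add_mem _ (Submodule.mem_sup_left hm) (Submodule.mem_sup_right h2)
  have hAfin : A.Finite := s.finite_toSet.image g
  have hDfin : Dset.Finite := by
    have : Dset = Set.image2 (fun u v => ⁅u, v⁆) A A := by
      ext z
      simp [hDset, Set.mem_image2]
    rw [this]
    exact Set.Finite.image2 _ hAfin hAfin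
  have : (⊤ : Submodule K T).FG := by
    rw [htop]
    exact Submodule.FG.sup (Submodule.fg_span hAfin) (Submodule.fg_span hDfin)
  exact Module.finite_def.mpr this

end Aux

section Main

variable {K : Type u} [Field K]

private def quotMkHom {C : Type u} [LieRing C] [LieAlgebra K C] (B : LieIdeal K C) :
    C →ₗ⁅K⁆ C ⧸ B :=
  { (B : Submodule K C).mkQ with map_lie' := fun {_ _} => rfl }

private lemma isCPElem_of_pair {C L : Type u} [LieRing C] [LieAlgebra K C]
    [LieRing L] [LieAlgebra K L] {B : LieIdeal K C} (hp : IsCPPair K L C B) :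
    ∃ lam : C →ₗ⁅K⁆ L, IsCPElem lam ∧ lam.ker = B := by
  obtain ⟨⟨e⟩, hle, hbr⟩ := hp
  set lam : C →ₗ⁅K⁆ L := (e : C ⧸ B →ₗ⁅K⁆ L).comp (quotMkHom B) with hlam
  have hker : lam.ker = B := by
    ext x
    rw [LieHom.mem_ker]
    have hx0 : lam x = e (LieSubmodule.Quotient.mk' B x) := rfl
    rw [hx0]
    constructor
    · intro hx
      have h0 : e (LieSubmodule.Quotient.mk' B x) = e 0 := by
        rw [hx]
        exact (e.toLinearEquiv.map_zero).symm
      have := e.injective h0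
      rwa [LieSubmodule.Quotient.mk_eq_zero] at this
    · intro hx
      have h0 : LieSubmodule.Quotient.mk' B x = 0 :=
        (LieSubmodule.Quotient.mk_eq_zero B).mpr hx
      rw [h0]
      exact e.toLinearEquiv.map_zero
  refine ⟨lam, ⟨?_, ?_, ?_⟩, hker⟩
  · exact e.surjective.comp (LieSubmodule.Quotient.surjective_mk' B)
  · rw [hker]
    exact fun x hx => ⟨(hle hx).2, (hle hx).1⟩
  · rw [hker]; exact hbr

private lemma pair_of_elem {T L : Type u} [LieRing T] [LieAlgebra K T]
    [LieRing L] [LieAlgebra K L] (τ : T →ₗ⁅K⁆ L) (hT : IsCPElem τ) :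
    IsCPPair K L T τ.ker := by
  refine ⟨?_, fun x hx => ⟨(hT.2.1 hx).2, (hT.2.1 hx).1⟩, hT.2.2⟩
  have hbij : Function.Bijective τ.range.incl := by
    refine ⟨Subtype.val_injective, fun y => ?_⟩
    obtain ⟨x, hx⟩ := hT.1 y
    exact ⟨⟨y, (τ.mem_range y).mpr ⟨x, hx⟩⟩, rfl⟩
  exact ⟨τ.quotKerEquivRange.trans (LieEquiv.ofBijective τ.range.incl hbij)⟩

end Main

/-- for a finite-dimensional Lie algebra `L`, if `c(L)` contains a universal
element `(T, τ)`, then any two CP covers of `L` are isomorphic. -/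
theorem cp_covers_isomorphic
    (K : Type u) [Field K] (L : Type u) [LieRing L] [LieAlgebra K L] [Module.Finite K L]
    (T : Type u) [LieRing T] [LieAlgebra K T] (τ : T →ₗ⁅K⁆ L)
    (hT : IsCPElem τ)
    (huniv : ∀ (C : Type u) [LieRing C] [LieAlgebra K C] (lam : C →ₗ⁅K⁆ L),
      IsCPElem lam → ∃ h : T →ₗ⁅K⁆ C, lam.comp h = τ)
    (C₁ C₂ : Type u) [LieRing C₁] [LieAlgebra K C₁] [LieRing C₂] [LieAlgebra K C₂]
    (h₁ : IsCPCover K L C₁) (h₂ : IsCPCover K L C₂) :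
    Nonempty (C₁ ≃ₗ⁅K⁆ C₂) := by
  obtain ⟨B₁, hp₁, hmax₁⟩ := h₁
  obtain ⟨B₂, hp₂, hmax₂⟩ := h₂
  haveI hTfin : Module.Finite K T := finite_of_cp τ hT.1 hT.2.1
  have hpairT : IsCPPair K L T τ.ker := pair_of_elem τ hT
  have key : ∀ (C : Type u) [LieRing C] [LieAlgebra K C] (B : LieIdeal K C),
      IsCPPair K L C B →
      (∀ (C' : Type u) [LieRing C'] [LieAlgebra K C'] (B' : LieIdeal K C'),
        IsCPPair K L C' B' → Module.finrank K C' ≤ Module.finrank K C) →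
      Nonempty (T ≃ₗ⁅K⁆ C) := by
    intro C _ _ B hp hmax
    obtain ⟨lam, he, hk⟩ := isCPElem_of_pair hp
    obtain ⟨f, hf⟩ := huniv C lam he
    have hfs : Function.Surjective f := by
      refine surj_of_factor lam he.2.1 f ?_
      rw [hf]; exact hT.1
    haveI : Module.Finite K C := Module.Finite.of_surjective (f : T →ₗ[K] C) hfs
    have hle : Module.finrank K T ≤ Module.finrank K C := hmax T τ.ker hpairT
    have hrn := LinearMap.finrank_range_add_finrank_ker (f : T →ₗ[K] C)
    have hr : LinearMap.range (f : T →ₗ[K] C) = ⊤ := LinearMap.range_eq_top.mpr hfs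
    rw [hr, finrank_top] at hrn
    have hk0 : Module.finrank K (LinearMap.ker (f : T →ₗ[K] C)) = 0 := by omega
    have hkbot : LinearMap.ker (f : T →ₗ[K] C) = ⊥ := Submodule.finrank_eq_zero.mp hk0
    have hinj : Function.Injective f := LinearMap.ker_eq_bot.mp hkbot
    exact ⟨LieEquiv.ofBijective f ⟨hinj, hfs⟩⟩
  obtain ⟨E₁⟩ := key C₁ B₁ hp₁ hmax₁
  obtain ⟨E₂⟩ := key C₂ B₂ hp₂ hmax₂
  exact ⟨E₁.symm.trans E₂⟩
end

section
/- Let G and H be groups (respectively Lie rings) fitting in a central extension 1 → N → G → Q → 1. The extension is a CP extension (i.e., commuting pairs in Q lift to commuting pairs in G) if and only if χ(N) ∩ K(G) = 1, where K(G) is the set of commutators of G and χ : N → G the inclusion. -/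
open scoped commutatorElement

/-- a central extension `1 → N → G → Q → 1` of groups is a CP extension
(commuting pairs of `Q` have commuting lifts in `G`) if and only if `χ(N) ∩ K(G) = 1`,
where `K(G)` is the set of commutators of `G`. -/
theorem central_extension_cp_iff
    (N G Q : Type*) [Group N] [Group G] [Group Q]
    (χ : N →* G) (π : G →* Q)
    (hχ : Function.Injective χ) (hπ : Function.Surjective π)
    (hexact : π.ker = χ.range)
    (hcentral : χ.range ≤ Subgroup.center G) :
    (∀ a b : Q, a * b = b * a →
        ∃ a' b' : G, π a' = a ∧ π b' = b ∧ a' * b' = b' * a') ↔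
      ∀ x ∈ χ.range, (∃ y z : G, ⁅y, z⁆ = x) → x = 1 := by
  constructor
  · rintro hCP x hx ⟨y, z, rfl⟩
    have hker : ⁅y, z⁆ ∈ π.ker := hexact ▸ hx
    have hcomm : π y * π z = π z * π y := by
      have := MonoidHom.mem_ker.mp hker
      rw [map_commutatorElement] at this
      exact commutatorElement_eq_one_iff_mul_comm.mp this
    obtain ⟨y', z', hy', hz', hc⟩ := hCP (π y) (π z) hcomm
    have hn : y'⁻¹ * y ∈ Subgroup.center G := by
      apply hcentral; rw [← hexact, MonoidHom.mem_ker, map_mul, map_inv, hy',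
        inv_mul_cancel]
    have hm : z'⁻¹ * z ∈ Subgroup.center G := by
      apply hcentral; rw [← hexact, MonoidHom.mem_ker, map_mul, map_inv, hz',
        inv_mul_cancel]
    have hyz : y * z = z * y := by
      have hy : y = y' * (y'⁻¹ * y) := by group
      have hz : z = z' * (z'⁻¹ * z) := by group
      have cn : ∀ g : G, Commute (y'⁻¹ * y) g := fun g =>
        (Subgroup.mem_center_iff.mp hn g).symm
      have cm : ∀ g : G, Commute (z'⁻¹ * z) g := fun g =>
        (Subgroup.mem_center_iff.mp hm g).symm
      have : Commute (y' * (y'⁻¹ * y)) (z' * (z'⁻¹ * z)) :=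
        (((show Commute y' z' from hc).mul_left (cn z')).mul_right ((cm _).symm))
      rw [hy, hz]; exact this
    exact commutatorElement_eq_one_iff_mul_comm.mpr hyz
  · rintro hK a b hab
    obtain ⟨a', rfl⟩ := hπ a
    obtain ⟨b', rfl⟩ := hπ b
    refine ⟨a', b', rfl, rfl, ?_⟩
    have hx : ⁅a', b'⁆ ∈ χ.range := by
      rw [← hexact, MonoidHom.mem_ker, map_commutatorElement]
      exact commutatorElement_eq_one_iff_mul_comm.mpr hab
    exact commutatorElement_eq_one_iff_mul_comm.mp (hK _ hx ⟨a', b', rfl⟩)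
end

section
/- Let L be the Lie ring over ℤ/pℤ-coefficients (p ≥ 5) with presentation generated by v, v₁, v₂, v₃ subject to [v₁,v] = v₂ - v₃/2, [v₂,v] = v₃, pv₁ = pv₂ = pv₃ = 0, v₃ = p²v (a p-Lie ring of order p⁵ and nilpotency class 3). Then the Bogomolov multiplier B̃₀(L) is trivial. -/
/-- the `p`-Lie ring (`p ≥ 5`) of order `p⁵` and class `3` presented by
generators `v, v₁, v₂, v₃` and relations `[v₁,v] = v₂ - v₃/2`, `[v₂,v] = v₃`, `v₃ = p²v`,
`pv₁ = pv₂ = pv₃ = 0` (other brackets of generators trivial; `1/2` is realised as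
`(p+1)/2` modulo the `p`-torsion) has trivial Bogomolov multiplier: by the Hopf-type
formula, `R ∩ F² ⊆ ⟨K(F) ∩ R⟩`. -/
theorem bogomolov_trivial_example_one (p : ℕ) (hp : p.Prime) (hp5 : 5 ≤ p)
    (v : Fin 4 → FreeLieAlgebra ℤ (Fin 4)) (hv : v = FreeLieAlgebra.of ℤ)
    (R : LieIdeal ℤ (FreeLieAlgebra ℤ (Fin 4)))
    (hR : R = LieSubmodule.lieSpan ℤ (FreeLieAlgebra ℤ (Fin 4))
      {⁅v 1, v 0⁆ - v 2 + ((p + 1) / 2) • v 3,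
       ⁅v 2, v 0⁆ - v 3,
       v 3 - p ^ 2 • v 0,
       p • v 1, p • v 2, p • v 3, p ^ 3 • v 0,
       ⁅v 2, v 1⁆, ⁅v 3, v 1⁆, ⁅v 3, v 2⁆}) :
    R ⊓ LieAlgebra.derivedSeries ℤ (FreeLieAlgebra ℤ (Fin 4)) 1 ≤
      LieSubmodule.lieSpan ℤ (FreeLieAlgebra ℤ (Fin 4))
        {z | (∃ x y : FreeLieAlgebra ℤ (Fin 4), ⁅x, y⁆ = z) ∧ z ∈ R} := by
  subst hv
  set L := FreeLieAlgebra ℤ (Fin 4) with hLdef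
  set v : Fin 4 → L := FreeLieAlgebra.of ℤ with hvdef
  set S : LieIdeal ℤ L :=
    LieSubmodule.lieSpan ℤ L {z | (∃ x y : L, ⁅x, y⁆ = z) ∧ z ∈ R} with hSdef
  have hA : ∀ (f : L) {r : L}, r ∈ R → ⁅f, r⁆ ∈ S := by
    intro f r hr
    exact LieSubmodule.subset_lieSpan ⟨⟨f, r, rfl⟩, R.lie_mem hr⟩
  have hA' : ∀ (f : L) {r : L}, r ∈ R → ⁅r, f⁆ ∈ S := by
    intro f r hr
    exact LieSubmodule.subset_lieSpan ⟨⟨r, f, rfl⟩, by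
      rw [← lie_skew]; exact neg_mem (R.lie_mem hr)⟩
  set g : Fin 7 → L :=
    ![⁅v 1, v 0⁆ - v 2 + ((p + 1) / 2) • v 3,
      ⁅v 2, v 0⁆ - v 3,
      v 3 - p ^ 2 • v 0,
      p • v 1, p • v 2, p • v 3, p ^ 3 • v 0] with hgdef
  have hg0 : g 0 = ⁅v 1, v 0⁆ - v 2 + ((p + 1) / 2) • v 3 := rfl
  have hg1 : g 1 = ⁅v 2, v 0⁆ - v 3 := rfl
  have hg2 : g 2 = v 3 - p ^ 2 • v 0 := rfl
  have hg3 : g 3 = p • v 1 := rfl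
  have hg4 : g 4 = p • v 2 := rfl
  have hg5 : g 5 = p • v 3 := rfl
  have hg6 : g 6 = p ^ 3 • v 0 := rfl
  have hgR : ∀ i, g i ∈ R := by
    intro i
    rw [hR]
    apply LieSubmodule.subset_lieSpan
    fin_cases i
    · exact Set.mem_insert _ _
    · exact Set.mem_insert_iff.mpr (Or.inr (Set.mem_insert _ _))
    · exact Set.mem_insert_iff.mpr (Or.inr (Set.mem_insert_iff.mpr (Or.inr
        (Set.mem_insert _ _))))
    · exact Set.mem_insert_iff.mpr (Or.inr (Set.mem_insert_iff.mpr (Or.inr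
        (Set.mem_insert_iff.mpr (Or.inr (Set.mem_insert _ _))))))
    · exact Set.mem_insert_iff.mpr (Or.inr (Set.mem_insert_iff.mpr (Or.inr
        (Set.mem_insert_iff.mpr (Or.inr (Set.mem_insert_iff.mpr (Or.inr
        (Set.mem_insert _ _))))))))
    · exact Set.mem_insert_iff.mpr (Or.inr (Set.mem_insert_iff.mpr (Or.inr
        (Set.mem_insert_iff.mpr (Or.inr (Set.mem_insert_iff.mpr (Or.inr
        (Set.mem_insert_iff.mpr (Or.inr (Set.mem_insert _ _))))))))))
    · exact Set.mem_insert_iff.mpr (Or.inr (Set.mem_insert_iff.mpr (Or.inr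
        (Set.mem_insert_iff.mpr (Or.inr (Set.mem_insert_iff.mpr (Or.inr
        (Set.mem_insert_iff.mpr (Or.inr (Set.mem_insert_iff.mpr (Or.inr
        (Set.mem_insert _ _))))))))))))
  have hspanR : Submodule.span ℤ (Set.range g) ≤ R.toSubmodule := by
    rw [Submodule.span_le]
    rintro _ ⟨i, rfl⟩
    exact hgR i
  have hUlie : ∀ (x m : L),
      m ∈ S.toSubmodule ⊔ Submodule.span ℤ (Set.range g) →
      ⁅x, m⁆ ∈ S.toSubmodule ⊔ Submodule.span ℤ (Set.range g) := by
    intro x m hm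
    rw [Submodule.mem_sup] at hm
    obtain ⟨s, hs, t, ht, rfl⟩ := hm
    rw [lie_add]
    exact Submodule.add_mem _ (Submodule.mem_sup_left (S.lie_mem hs))
      (Submodule.mem_sup_left (hA x (hspanR ht)))
  set U : LieIdeal ℤ L :=
    { toSubmodule := S.toSubmodule ⊔ Submodule.span ℤ (Set.range g),
      lie_mem := fun {x m} hm => hUlie x m hm } with hUdef
  have hgU : ∀ i, g i ∈ U := fun i =>
    Submodule.mem_sup_right (Submodule.subset_span ⟨i, rfl⟩)
  have hRU : R ≤ U := by
    rw [hR, LieSubmodule.lieSpan_le]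
    intro z hz
    simp only [Set.mem_insert_iff, Set.mem_singleton_iff] at hz
    rcases hz with rfl | rfl | rfl | rfl | rfl | rfl | rfl | rfl | rfl | rfl
    · exact hgU 0
    · exact hgU 1
    · exact hgU 2
    · exact hgU 3
    · exact hgU 4
    · exact hgU 5
    · exact hgU 6
    · exact Submodule.mem_sup_left (LieSubmodule.subset_lieSpan
        ⟨⟨v 2, v 1, rfl⟩, hR ▸ LieSubmodule.subset_lieSpan (by simp)⟩)
    · exact Submodule.mem_sup_left (LieSubmodule.subset_lieSpan
        ⟨⟨v 3, v 1, rfl⟩, hR ▸ LieSubmodule.subset_lieSpan (by simp)⟩)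
    · exact Submodule.mem_sup_left (LieSubmodule.subset_lieSpan
        ⟨⟨v 3, v 2, rfl⟩, hR ▸ LieSubmodule.subset_lieSpan (by simp)⟩)
  letI : LieRing (Fin 4 → ℤ) := LieRing.ofAssociativeRing
  set π : L →ₗ⁅ℤ⁆ (Fin 4 → ℤ) :=
    FreeLieAlgebra.lift ℤ (fun i => (Pi.single i 1 : Fin 4 → ℤ)) with hπdef
  have hπv : ∀ i, π (v i) = Pi.single i 1 := fun i => FreeLieAlgebra.lift_of_apply _ _
  have habel : ∀ a b : Fin 4 → ℤ, ⁅a, b⁆ = 0 := by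
    intro a b
    rw [LieRing.of_associative_ring_bracket, mul_comm, sub_self]
  have hπbrk : ∀ x y : L, π ⁅x, y⁆ = 0 := by
    intro x y
    rw [LieHom.map_lie, habel]
  have hπD : ∀ w : L, w ∈ LieAlgebra.derivedSeries ℤ L 1 → π w = 0 := by
    intro w hw
    have key : (⁅(⊤ : LieIdeal ℤ L), (⊤ : LieIdeal ℤ L)⁆ : LieIdeal ℤ L).toSubmodule
        = Submodule.span ℤ
          {m | ∃ x ∈ (⊤ : LieIdeal ℤ L), ∃ n ∈ (⊤ : LieIdeal ℤ L), ⁅x, n⁆ = m} :=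
      LieSubmodule.lieIdeal_oper_eq_linear_span' ..
    have hw' : w ∈ Submodule.span ℤ
        {m | ∃ x ∈ (⊤ : LieIdeal ℤ L), ∃ n ∈ (⊤ : LieIdeal ℤ L), ⁅x, n⁆ = m} := by
      rw [← key]; exact hw
    refine Submodule.span_induction ?_ ?_ ?_ ?_ hw'
    · rintro m ⟨x, -, y, -, rfl⟩; exact hπbrk x y
    · exact π.map_zero
    · intro a b _ _ ha hb; rw [map_add π, ha, hb, add_zero]
    · intro t a _ ha; rw [map_smul π, ha, smul_zero]
  have hSD : S ≤ LieAlgebra.derivedSeries ℤ L 1 := by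
    rw [hSdef, LieSubmodule.lieSpan_le]
    rintro z ⟨⟨x, y, rfl⟩, -⟩
    exact LieSubmodule.lie_mem_lie (LieSubmodule.mem_top x) (LieSubmodule.mem_top y)
  rintro x ⟨hxR, hxD⟩
  have hxU : x ∈ U := hRU hxR
  obtain ⟨s, hs, t, ht, rfl⟩ := Submodule.mem_sup.mp hxU
  rw [Submodule.mem_span_range_iff_exists_fun] at ht
  obtain ⟨a, hat⟩ := ht
  have hπx : π (s + t) = 0 := hπD _ hxD
  have hπs : π s = 0 := hπD s (hSD hs)
  have hπt : π t = 0 := by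
    rw [map_add π, hπs, zero_add] at hπx
    exact hπx
  have hπtval : π t = (-(a 0)) • (Pi.single 2 1 : Fin 4 → ℤ)
      + ((a 0) * (((p + 1) / 2 : ℕ) : ℤ)) • (Pi.single 3 1 : Fin 4 → ℤ)
      + (-(a 1)) • (Pi.single 3 1 : Fin 4 → ℤ)
      + (a 2) • (Pi.single 3 1 : Fin 4 → ℤ)
      + (-(a 2) * (p : ℤ)^2) • (Pi.single 0 1 : Fin 4 → ℤ)
      + ((a 3) * p) • (Pi.single 1 1 : Fin 4 → ℤ)
      + ((a 4) * p) • (Pi.single 2 1 : Fin 4 → ℤ)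
      + ((a 5) * p) • (Pi.single 3 1 : Fin 4 → ℤ)
      + ((a 6) * (p : ℤ)^3) • (Pi.single 0 1 : Fin 4 → ℤ) := by
    rw [← hat, Fin.sum_univ_seven, hg0, hg1, hg2, hg3, hg4, hg5, hg6]
    simp only [← Nat.cast_smul_eq_nsmul ℤ, Nat.cast_pow]
    simp only [map_add π, map_sub π, map_smul π, hπbrk, hπv]
    module
  have hπt' := hπtval.symm.trans hπt
  have e0 := congrFun hπt' 0
  have e1 := congrFun hπt' 1
  have e2 := congrFun hπt' 2
  have e3 := congrFun hπt' 3
  simp [Pi.single_apply] at e0 e1 e2 e3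
  have hp0 : (p : ℤ) ≠ 0 := Int.natCast_ne_zero.mpr hp.ne_zero
  have ha3 : a 3 = 0 := e1.resolve_right hp.ne_zero
  have ha0 : a 0 = a 4 * (p : ℤ) := by linarith
  have ha2 : a 2 = a 6 * (p : ℤ) :=
    mul_left_cancel₀ (pow_ne_zero 2 hp0) (by linear_combination -e0)
  have ha1 : a 1 = a 4 * (p : ℤ) * (((p : ℤ) + 1) / 2)
      + a 6 * (p : ℤ) + a 5 * (p : ℤ) := by
    linear_combination -e3 + (((p : ℤ) + 1) / 2) * ha0 + ha2
  have hfinal : ∑ i, a i • g i =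
      a 4 • ⁅(p : ℤ) • v 1, v 0⁆
        + (a 4 * (((p : ℤ) + 1) / 2) + a 6 + a 5) • ⁅(p : ℤ) • v 2, v 0⁆ := by
    rw [Fin.sum_univ_seven, hg0, hg1, hg2, hg3, hg4, hg5, hg6]
    simp only [← Nat.cast_smul_eq_nsmul ℤ, Nat.cast_pow]
    rw [ha0, ha1, ha2, ha3, smul_lie, smul_lie]
    module
  have h1R : (p : ℤ) • v 1 ∈ R := by
    rw [Nat.cast_smul_eq_nsmul ℤ]
    exact hR ▸ LieSubmodule.subset_lieSpan (by simp)
  have h2R : (p : ℤ) • v 2 ∈ R := by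
    rw [Nat.cast_smul_eq_nsmul ℤ]
    exact hR ▸ LieSubmodule.subset_lieSpan (by simp)
  have hz1 : ⁅(p : ℤ) • v 1, v 0⁆ ∈ S := hA' (v 0) h1R
  have hz2 : ⁅(p : ℤ) • v 2, v 0⁆ ∈ S := hA' (v 0) h2R
  have htS : t ∈ S := by
    rw [← hat, hfinal]
    exact S.add_mem (S.smul_mem _ hz1) (S.smul_mem _ hz2)
  exact S.add_mem hs htS
end

section
/- Let L be the p-Lie ring (p ≥ 5) of order p⁶ and class 3 generated by v, v₁,...,v₅ with relations [v₁,v₂] = v₃ - v₄/2 - v₅/2, [v₃,v₁] = v₄, [v₃,v₂] = v₅, [v,v₁] = v₄, and pvᵢ = 0 for all i (all other brackets of generators zero). Then the Bogomolov multiplier B̃₀(L) is trivial. -/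
set_option maxHeartbeats 1000000

attribute [local instance] LieRing.ofAssociativeRing

/-- Abelianization map of the free Lie algebra on 6 generators. -/
noncomputable def bogPhi2 : FreeLieAlgebra ℤ (Fin 6) →ₗ⁅ℤ⁆ (Fin 6 → ℤ) :=
  FreeLieAlgebra.lift ℤ (fun i => Pi.single i 1)

lemma bogPhi2_lie (x y : FreeLieAlgebra ℤ (Fin 6)) : bogPhi2 ⁅x, y⁆ = 0 := by
  rw [LieHom.map_lie, Ring.lie_def, mul_comm, sub_self]

lemma bogPhi2_of (i : Fin 6) : bogPhi2 (FreeLieAlgebra.of ℤ i) = Pi.single i 1 :=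
  FreeLieAlgebra.lift_of_apply _ i

lemma bogPhi2_derived {z : FreeLieAlgebra ℤ (Fin 6)}
    (hz : z ∈ LieAlgebra.derivedSeries ℤ (FreeLieAlgebra ℤ (Fin 6)) 1) : bogPhi2 z = 0 := by
  have h : LieAlgebra.derivedSeries ℤ (FreeLieAlgebra ℤ (Fin 6)) 1 ≤ bogPhi2.ker := by
    rw [LieAlgebra.derivedSeries_def, LieAlgebra.derivedSeriesOfIdeal_succ,
      LieAlgebra.derivedSeriesOfIdeal_zero, LieSubmodule.lieIdeal_oper_eq_span,
      LieSubmodule.lieSpan_le]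
    rintro z ⟨x, y, rfl⟩
    have := bogPhi2_lie (x : FreeLieAlgebra ℤ (Fin 6)) y
    simpa [LieHom.mem_ker] using this
  exact LieHom.mem_ker.mp (h hz)

/-- the `p`-Lie ring (`p ≥ 5`) of order `p⁶` and class `3` presented by
generators `v, v₁, …, v₅` and relations `[v₁,v₂] = v₃ - v₄/2 - v₅/2`, `[v₃,v₁] = v₄`,
`[v₃,v₂] = v₅`, `[v,v₁] = v₄`, `pvᵢ = 0`, all other brackets of generators trivial
(`1/2` is realised as `(p+1)/2` modulo the `p`-torsion), has trivial Bogomolov multiplier: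
by the Hopf-type formula, `R ∩ F² ⊆ ⟨K(F) ∩ R⟩`. -/
theorem bogomolov_trivial_example_two (p : ℕ) (hp : p.Prime) (hp5 : 5 ≤ p)
    (v : Fin 6 → FreeLieAlgebra ℤ (Fin 6)) (hv : v = FreeLieAlgebra.of ℤ)
    (R : LieIdeal ℤ (FreeLieAlgebra ℤ (Fin 6)))
    (hR : R = LieSubmodule.lieSpan ℤ (FreeLieAlgebra ℤ (Fin 6))
      {⁅v 1, v 2⁆ - v 3 + ((p + 1) / 2) • v 4 + ((p + 1) / 2) • v 5,
       ⁅v 3, v 1⁆ - v 4,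
       ⁅v 3, v 2⁆ - v 5,
       ⁅v 0, v 1⁆ - v 4,
       p • v 0, p • v 1, p • v 2, p • v 3, p • v 4, p • v 5,
       ⁅v 0, v 2⁆, ⁅v 0, v 3⁆, ⁅v 0, v 4⁆, ⁅v 0, v 5⁆,
       ⁅v 1, v 4⁆, ⁅v 1, v 5⁆, ⁅v 2, v 4⁆, ⁅v 2, v 5⁆,
       ⁅v 3, v 4⁆, ⁅v 3, v 5⁆, ⁅v 4, v 5⁆}) :
    R ⊓ LieAlgebra.derivedSeries ℤ (FreeLieAlgebra ℤ (Fin 6)) 1 ≤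
      LieSubmodule.lieSpan ℤ (FreeLieAlgebra ℤ (Fin 6))
        {z | (∃ x y : FreeLieAlgebra ℤ (Fin 6), ⁅x, y⁆ = z) ∧ z ∈ R} := by
  subst hv
  set w : Fin 6 → FreeLieAlgebra ℤ (Fin 6) := FreeLieAlgebra.of ℤ with hw
  set q : ℕ := (p + 1) / 2 with hq
  set G : Set (FreeLieAlgebra ℤ (Fin 6)) :=
      {⁅w 1, w 2⁆ - w 3 + q • w 4 + q • w 5,
       ⁅w 3, w 1⁆ - w 4,
       ⁅w 3, w 2⁆ - w 5,
       ⁅w 0, w 1⁆ - w 4,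
       p • w 0, p • w 1, p • w 2, p • w 3, p • w 4, p • w 5,
       ⁅w 0, w 2⁆, ⁅w 0, w 3⁆, ⁅w 0, w 4⁆, ⁅w 0, w 5⁆,
       ⁅w 1, w 4⁆, ⁅w 1, w 5⁆, ⁅w 2, w 4⁆, ⁅w 2, w 5⁆,
       ⁅w 3, w 4⁆, ⁅w 3, w 5⁆, ⁅w 4, w 5⁆} with hG
  set S := LieSubmodule.lieSpan ℤ (FreeLieAlgebra ℤ (Fin 6))
      {z | (∃ x y : FreeLieAlgebra ℤ (Fin 6), ⁅x, y⁆ = z) ∧ z ∈ R} with hS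
  have hgenR : ∀ z ∈ G, z ∈ R := by
    intro z hz; rw [hR]; exact LieSubmodule.subset_lieSpan hz
  have memS : ∀ {z : FreeLieAlgebra ℤ (Fin 6)},
      (∃ x y : FreeLieAlgebra ℤ (Fin 6), ⁅x, y⁆ = z) → z ∈ R → z ∈ S := by
    intro z h1 h2; rw [hS]; exact LieSubmodule.subset_lieSpan ⟨h1, h2⟩
  have hlieR : ∀ (x : FreeLieAlgebra ℤ (Fin 6)) {y}, y ∈ R → ⁅y, x⁆ ∈ R := by
    intro x y hy
    rw [← lie_skew]
    exact neg_mem (LieSubmodule.lie_mem R hy)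
  set Msub := Submodule.span ℤ G with hM
  have hMR : ∀ z ∈ Msub, z ∈ R := by
    intro z hz
    have hle : Msub ≤ (R : Submodule ℤ (FreeLieAlgebra ℤ (Fin 6))) :=
      Submodule.span_le.mpr (fun y hy => (LieSubmodule.mem_toSubmodule _).mpr (hgenR y hy))
    exact (LieSubmodule.mem_toSubmodule _).mp (hle hz)
  let N : LieIdeal ℤ (FreeLieAlgebra ℤ (Fin 6)) :=
    { toSubmodule := Msub ⊔ (S : Submodule ℤ (FreeLieAlgebra ℤ (Fin 6))),
      lie_mem := by
        intro x m hm
        obtain ⟨a, ha, b, hb, rfl⟩ := Submodule.mem_sup.mp hm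
        have h1 : ⁅x, a⁆ ∈ S := memS ⟨x, a, rfl⟩ (LieSubmodule.lie_mem R (hMR a ha))
        have h2 : ⁅x, b⁆ ∈ S := LieSubmodule.lie_mem S ((LieSubmodule.mem_toSubmodule _).mp hb)
        have hab : ⁅x, a + b⁆ = ⁅x, a⁆ + ⁅x, b⁆ := lie_add x a b
        show ⁅x, a + b⁆ ∈ Msub ⊔ (S : Submodule ℤ (FreeLieAlgebra ℤ (Fin 6)))
        rw [hab]
        exact Submodule.add_mem _
          (Submodule.mem_sup_right ((LieSubmodule.mem_toSubmodule _).mpr h1))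
          (Submodule.mem_sup_right ((LieSubmodule.mem_toSubmodule _).mpr h2)) }
  have hRN : R ≤ N := by
    rw [hR, LieSubmodule.lieSpan_le]
    intro z hz
    exact Submodule.mem_sup_left (Submodule.subset_span hz)
  intro x hx
  rw [LieSubmodule.mem_inf] at hx
  obtain ⟨hxR, hxD⟩ := hx
  have hxN : x ∈ Msub ⊔ (S : Submodule ℤ (FreeLieAlgebra ℤ (Fin 6))) := hRN hxR
  obtain ⟨m, hm, s, hs, rfl⟩ := Submodule.mem_sup.mp hxN
  have hsS : s ∈ S := (LieSubmodule.mem_toSubmodule _).mp hs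
  have hSD : S ≤ LieAlgebra.derivedSeries ℤ (FreeLieAlgebra ℤ (Fin 6)) 1 := by
    rw [hS, LieSubmodule.lieSpan_le]
    rintro z ⟨⟨a, b, rfl⟩, -⟩
    rw [LieAlgebra.derivedSeries_def, LieAlgebra.derivedSeriesOfIdeal_succ,
      LieAlgebra.derivedSeriesOfIdeal_zero]
    exact LieSubmodule.lie_mem_lie (LieSubmodule.mem_top a) (LieSubmodule.mem_top b)
  suffices hmS : m ∈ S from add_mem hmS hsS
  have hmD : m ∈ LieAlgebra.derivedSeries ℤ (FreeLieAlgebra ℤ (Fin 6)) 1 := by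
    have h := sub_mem hxD (hSD hsS)
    simpa using h
  have hphim : bogPhi2 m = 0 := bogPhi2_derived hmD
  rw [hM, hG] at hm
  simp only [Submodule.mem_span_insert, Submodule.mem_span_singleton] at hm
  obtain ⟨c0, z0, ⟨c1, z1, ⟨c2, z2, ⟨c3, z3, ⟨c4, z4, ⟨c5, z5, ⟨c6, z6, ⟨c7, z7, ⟨c8, z8, ⟨c9, z9, ⟨c10, z10, ⟨c11, z11, ⟨c12, z12, ⟨c13, z13, ⟨c14, z14, ⟨c15, z15, ⟨c16, z16, ⟨c17, z17, ⟨c18, z18, ⟨c19, z19, ⟨c20, rfl⟩, rfl⟩, rfl⟩, rfl⟩, rfl⟩, rfl⟩, rfl⟩, rfl⟩, rfl⟩, rfl⟩, rfl⟩, rfl⟩, rfl⟩, rfl⟩, rfl⟩, rfl⟩, rfl⟩, rfl⟩, rfl⟩, rfl⟩, rfl⟩ := hm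
  have hof : ∀ i, bogPhi2 (w i) = Pi.single i 1 := fun i => bogPhi2_of i
  simp only [← Nat.cast_smul_eq_nsmul ℤ] at hphim ⊢
  simp only [map_add, map_sub, map_smul, bogPhi2_lie, hof, smul_zero,
    zero_sub, zero_add, add_zero, smul_neg] at hphim
  have e0 := congrFun hphim 0
  have e1 := congrFun hphim 1
  have e2 := congrFun hphim 2
  have e3 := congrFun hphim 3
  have e4 := congrFun hphim 4
  have e5 := congrFun hphim 5
  simp only [Pi.add_apply, Pi.smul_apply, Pi.neg_apply, Pi.sub_apply, Pi.zero_apply,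
    Pi.single_apply, smul_eq_mul] at e0 e1 e2 e3 e4 e5
  simp only [Fin.reduceEq, reduceIte, neg_zero, add_zero, zero_add, neg_neg, mul_neg, mul_one, mul_zero] at e0 e1 e2 e3 e4 e5
  have hp0 : (p : ℤ) ≠ 0 := by positivity
  have hc4 : c4 = 0 := by
    rcases mul_eq_zero.mp e0 with h | h
    · exact h
    · exact absurd h hp0
  have hc5 : c5 = 0 := by
    rcases mul_eq_zero.mp e1 with h | h
    · exact h
    · exact absurd h hp0
  have hc6 : c6 = 0 := by
    rcases mul_eq_zero.mp e2 with h | h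
    · exact h
    · exact absurd h hp0
  have hc0 : c0 = c7 * (p : ℤ) := by linear_combination -e3
  have hc2 : c2 = c7 * (p : ℤ) * (q : ℤ) + c9 * (p : ℤ) := by
    linear_combination -e5 - (q : ℤ) * e3
  have hc3 : c3 = c7 * (p : ℤ) * (q : ℤ) + c8 * (p : ℤ) - c1 := by
    linear_combination -e4 - (q : ℤ) * e3
  have hsmul : ∀ (a : ℤ) {y : FreeLieAlgebra ℤ (Fin 6)}, y ∈ R → a • y ∈ R := by
    intro a y hy
    rw [← LieSubmodule.mem_toSubmodule] at hy ⊢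
    exact Submodule.smul_mem _ a hy
  have hpv1 : (p : ℤ) • w 1 ∈ R := by
    rw [Nat.cast_smul_eq_nsmul]; exact hgenR _ (by simp [hG])
  have hpv2 : (p : ℤ) • w 2 ∈ R := by
    rw [Nat.cast_smul_eq_nsmul]; exact hgenR _ (by simp [hG])
  have hz1 : ⁅c7 • ((p : ℤ) • w 1), w 2⁆ ∈ S :=
    memS ⟨_, _, rfl⟩ (hlieR _ (hsmul c7 hpv1))
  have hz2 : ⁅c1 • (w 3 - w 0), w 1⁆ ∈ S := by
    refine memS ⟨_, _, rfl⟩ ?_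
    have hq2 : ⁅c1 • (w 3 - w 0), w 1⁆
        = c1 • (⁅w 3, w 1⁆ - w 4) - c1 • (⁅w 0, w 1⁆ - w 4) := by
      simp only [smul_lie, sub_lie]
      module
    rw [hq2]
    exact sub_mem (hsmul _ (hgenR _ (by simp [hG]))) (hsmul _ (hgenR _ (by simp [hG])))
  have hz3 : ⁅w 0, (c7 * (q : ℤ) + c8) • ((p : ℤ) • w 1)⁆ ∈ S :=
    memS ⟨_, _, rfl⟩ (LieSubmodule.lie_mem R (hsmul _ hpv1))
  have hz4 : ⁅w 3, (c7 * (q : ℤ) + c9) • ((p : ℤ) • w 2)⁆ ∈ S :=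
    memS ⟨_, _, rfl⟩ (LieSubmodule.lie_mem R (hsmul _ hpv2))
  have hj10 : ⁅c10 • w 0, w 2⁆ ∈ S := memS ⟨_, _, rfl⟩
    (by rw [smul_lie]; exact hsmul _ (hgenR _ (by simp [hG])))
  have hj11 : ⁅c11 • w 0, w 3⁆ ∈ S := memS ⟨_, _, rfl⟩
    (by rw [smul_lie]; exact hsmul _ (hgenR _ (by simp [hG])))
  have hj12 : ⁅c12 • w 0, w 4⁆ ∈ S := memS ⟨_, _, rfl⟩
    (by rw [smul_lie]; exact hsmul _ (hgenR _ (by simp [hG])))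
  have hj13 : ⁅c13 • w 0, w 5⁆ ∈ S := memS ⟨_, _, rfl⟩
    (by rw [smul_lie]; exact hsmul _ (hgenR _ (by simp [hG])))
  have hj14 : ⁅c14 • w 1, w 4⁆ ∈ S := memS ⟨_, _, rfl⟩
    (by rw [smul_lie]; exact hsmul _ (hgenR _ (by simp [hG])))
  have hj15 : ⁅c15 • w 1, w 5⁆ ∈ S := memS ⟨_, _, rfl⟩
    (by rw [smul_lie]; exact hsmul _ (hgenR _ (by simp [hG])))
  have hj16 : ⁅c16 • w 2, w 4⁆ ∈ S := memS ⟨_, _, rfl⟩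
    (by rw [smul_lie]; exact hsmul _ (hgenR _ (by simp [hG])))
  have hj17 : ⁅c17 • w 2, w 5⁆ ∈ S := memS ⟨_, _, rfl⟩
    (by rw [smul_lie]; exact hsmul _ (hgenR _ (by simp [hG])))
  have hj18 : ⁅c18 • w 3, w 4⁆ ∈ S := memS ⟨_, _, rfl⟩
    (by rw [smul_lie]; exact hsmul _ (hgenR _ (by simp [hG])))
  have hj19 : ⁅c19 • w 3, w 5⁆ ∈ S := memS ⟨_, _, rfl⟩
    (by rw [smul_lie]; exact hsmul _ (hgenR _ (by simp [hG])))
  have hj20 : ⁅c20 • w 4, w 5⁆ ∈ S := memS ⟨_, _, rfl⟩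
    (by rw [smul_lie]; exact hsmul _ (hgenR _ (by simp [hG])))
  have total := add_mem hz1 (add_mem hz2 (add_mem hz3 (add_mem hz4 (add_mem hj10 (add_mem hj11 (add_mem hj12 (add_mem hj13 (add_mem hj14 (add_mem hj15 (add_mem hj16 (add_mem hj17 (add_mem hj18 (add_mem hj19 hj20)))))))))))))
  rw [hc0, hc2, hc3, hc4, hc5, hc6]
  refine Set.mem_of_eq_of_mem ?_ total
  simp only [smul_lie, lie_smul, sub_lie, lie_sub, smul_smul, smul_sub, zero_smul, smul_add]
  module
end
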